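/- Let G be a group and a a left Engel element of G whose cyclic subgroup H = ⟨a⟩ is finite and not normal in G. Then there is an element of G outside H that normalizes H and is a conjugate of a; specifically, there exist x ∈ G and k ≥ 1 such that [x,_k a] ∉ H and [x,_k a] ∈ N_G(H). -/

import Mathlib

/-- The commutator `[a,b] = a⁻¹ b⁻¹ a b`. -/
def cmt {G : Type*} [Group G] (a b : G) : G := a⁻¹ * b⁻¹ * a * b

/-- Left-normed Engel commutator: `engel x y 0 = x`, `engel x y (n+1) = [engel x y n, y]`. -/
def engel {G : Type*} [Group G] (x y : G) : ℕ → G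
  | 0 => x
  | n + 1 => cmt (engel x y n) y

theorem stmt15 {G : Type*} [Group G] (a : G)
    (hEngel : ∀ x : G, ∃ n : ℕ, engel x a n = 1)
    (hfin : (Subgroup.zpowers a : Set G).Finite)
    (hnn : ¬ (Subgroup.zpowers a).Normal) :
    ∃ (x : G) (k : ℕ), 1 ≤ k ∧
      engel x a k ∉ Subgroup.zpowers a ∧
      engel x a k ∈ Subgroup.normalizer (Subgroup.zpowers a : Set G) := by
  classical
  set H := Subgroup.zpowers a with hH
  -- there is some x not in the normalizer
  have hx : ∃ x : G, x ∉ Subgroup.normalizer (H : Set G) := by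
    by_contra h
    push_neg at h
    exact hnn (Subgroup.normalizer_eq_top_iff.mp (top_unique fun g _ => h g))
  obtain ⟨x, hxn⟩ := hx
  have hex : ∃ n, engel x a n ∈ Subgroup.normalizer (H : Set G) := by
    obtain ⟨n, hn⟩ := hEngel x
    exact ⟨n, by rw [hn]; exact one_mem _⟩
  set k := Nat.find hex with hkdef
  have hk : engel x a k ∈ Subgroup.normalizer (H : Set G) := Nat.find_spec hex
  have hk1 : 1 ≤ k := by
    rcases Nat.eq_zero_or_pos k with h0 | h
    · exfalso; apply hxn; rw [h0] at hk; exact hk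
    · exact h
  set y := engel x a (k - 1) with hy_def
  have hy : y ∉ Subgroup.normalizer (H : Set G) := Nat.find_min hex (Nat.sub_lt hk1 one_pos)
  have hke : engel x a k = y⁻¹ * a⁻¹ * y * a := by
    conv_lhs => rw [show k = (k - 1) + 1 from (Nat.succ_pred_eq_of_pos hk1).symm]
    rfl
  refine ⟨x, k, hk1, ?_, hk⟩
  intro hmem
  -- derive y⁻¹ a y ∈ H
  have h1 : y⁻¹ * a * y ∈ H := by
    have h2 : y⁻¹ * a⁻¹ * y ∈ H := by
      have h3 := H.mul_mem hmem (H.inv_mem (Subgroup.mem_zpowers a))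
      rw [hke] at h3
      have : y⁻¹ * a⁻¹ * y * a * a⁻¹ = y⁻¹ * a⁻¹ * y := by group
      rwa [this] at h3
    have h4 := H.inv_mem h2
    have : (y⁻¹ * a⁻¹ * y)⁻¹ = y⁻¹ * a * y := by group
    rwa [this] at h4
  -- conjugation by y maps H into H
  have hzp : ∀ m : ℤ, (y⁻¹ * a * y) ^ m = y⁻¹ * a ^ m * y := by
    intro m
    have := map_zpow (MulAut.conj y⁻¹) a m
    simpa [MulAut.conj_apply] using this.symm
  have hconj : ∀ h ∈ H, y⁻¹ * h * y ∈ H := by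
    intro h hh
    rw [hH, Subgroup.mem_zpowers_iff] at hh
    obtain ⟨m, rfl⟩ := hh
    rw [← hzp m]
    exact H.zpow_mem h1 m
  -- H is finite, so conjugation by y is a bijection of H
  haveI : Finite H := hfin.to_subtype
  let f : H → H := fun h => ⟨y⁻¹ * h * y, hconj h h.2⟩
  have finj : Function.Injective f := by
    intro h1 h2 he
    have hv : y⁻¹ * (h1 : G) * y = y⁻¹ * h2 * y := congrArg Subtype.val he
    exact Subtype.ext (mul_left_cancel (mul_right_cancel hv))
  have fsurj := Finite.injective_iff_surjective.mp finj
  apply hy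
  rw [Subgroup.mem_normalizer_iff]
  intro h
  constructor
  · intro hh
    obtain ⟨⟨h', hh'⟩, he⟩ := fsurj ⟨h, hh⟩
    have hv : y⁻¹ * h' * y = h := congrArg Subtype.val he
    have : y * h * y⁻¹ = h' := by rw [← hv]; group
    rw [this]; exact hh'
  · intro hh
    have h2 := hconj _ hh
    have : y⁻¹ * (y * h * y⁻¹) * y = h := by group
    rwa [this] at h2
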